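/- arXiv:0912.5426 — 14 statements merged into one kernel-verified Lean document; each statement's English description precedes it below -/
import Mathlib

section
/- For a microdata table T with n rows, there exists an l-diverse partition of Fin n if and only if the whole index set Fin n, viewed as a single group, is l-eligible (i.e., for every b : B, l · |{i : sa(i) = b}| ≤ n). -/
open scoped Classical

/-- A partition of the row set `Fin n` into pairwise disjoint nonempty QI-groups
covering all rows. -/
structure MPartition (n : ℕ) where
  groups : Finset (Finset (Fin n))
  nonempty : ∀ G ∈ groups, G.Nonempty
  pairwiseDisjoint : (groups : Set (Finset (Fin n))).PairwiseDisjoint id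
  covers : ∀ i : Fin n, ∃ G ∈ groups, i ∈ G

/-- A group `G` is `l`-eligible if for every sensitive value `b`,
`l` times the number of rows of `G` with sensitive value `b` is at most `|G|`. -/
def Eligible {n d : ℕ} {V B : Type*} (l : ℕ)
    (T : Fin n → (Fin d → V) × B) (G : Finset (Fin n)) : Prop :=
  ∀ b : B, l * (G.filter (fun i => (T i).2 = b)).card ≤ G.card

/-- A partition is `l`-diverse if every one of its QI-groups is `l`-eligible. -/
def Diverse {n d : ℕ} {V B : Type*} (l : ℕ)
    (T : Fin n → (Fin d → V) × B) (P : MPartition n) : Prop :=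
  ∀ G ∈ P.groups, Eligible l T G

theorem stmt1 {n d : ℕ} {V B : Type*} (l : ℕ) (hl : 1 ≤ l)
    (T : Fin n → (Fin d → V) × B) :
    (∃ P : MPartition n, Diverse l T P) ↔ Eligible l T Finset.univ := by
  constructor
  · rintro ⟨P, hP⟩ b
    have huniv : (Finset.univ : Finset (Fin n)) = P.groups.biUnion id := by
      ext i
      simp only [Finset.mem_univ, Finset.mem_biUnion, id, true_iff]
      exact P.covers i
    have hdisj : ∀ G ∈ P.groups, ∀ H ∈ P.groups, G ≠ H →
        Disjoint (G.filter (fun i => (T i).2 = b)) (H.filter (fun i => (T i).2 = b)) := by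
      intro G hG H hH hne
      exact (P.pairwiseDisjoint hG hH hne).mono (Finset.filter_subset _ _)
        (Finset.filter_subset _ _)
    calc l * (Finset.univ.filter (fun i => (T i).2 = b)).card
        = l * ((P.groups.biUnion id).filter (fun i => (T i).2 = b)).card := by rw [huniv]
      _ = l * (P.groups.biUnion (fun G => G.filter (fun i => (T i).2 = b))).card := by
          rw [Finset.filter_biUnion]; rfl
      _ = ∑ G ∈ P.groups, l * (G.filter (fun i => (T i).2 = b)).card := by
          rw [Finset.card_biUnion hdisj, Finset.mul_sum]
      _ ≤ ∑ G ∈ P.groups, G.card := Finset.sum_le_sum (fun G hG => hP G hG b)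
      _ = (P.groups.biUnion id).card := by
          rw [Finset.card_biUnion (fun G hG H hH hne => P.pairwiseDisjoint hG hH hne)]
          rfl
      _ = (Finset.univ : Finset (Fin n)).card := by rw [huniv]
  · intro hE
    refine ⟨⟨Finset.univ.image (fun _ : Fin n => (Finset.univ : Finset (Fin n))),
      ?_, ?_, ?_⟩, ?_⟩
    · intro G hG
      obtain ⟨i, _, rfl⟩ := Finset.mem_image.mp hG
      exact ⟨i, Finset.mem_univ i⟩
    · intro G hG H hH hne
      exfalso
      apply hne
      simp only [Finset.coe_image, Set.mem_image] at hG hH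
      obtain ⟨_, _, rfl⟩ := hG
      obtain ⟨_, _, rfl⟩ := hH
      rfl
    · intro i
      exact ⟨Finset.univ, Finset.mem_image.mpr ⟨i, Finset.mem_univ i, rfl⟩,
        Finset.mem_univ i⟩
    · intro G hG
      obtain ⟨i, _, rfl⟩ := Finset.mem_image.mp hG
      exact hE
end

section
/- Let λ ≥ 1 be a real number and let P₃ be an l-diverse partition that is a λ-approximate solution to tuple minimization, i.e., supp(P₃) ≤ λ · supp(P) for every l-diverse partition P. Then P₃ is a (λ·d)-approximate solution to star minimization: stars(P₃) ≤ λ · d · stars(P) for every l-diverse partition P. -/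
open scoped Classical

/-- A group `G` disagrees on attribute `j` if two rows of `G` have different
QI values on attribute `j`. -/
def Disagrees {n d : ℕ} {V B : Type*} (T : Fin n → (Fin d → V) × B)
    (G : Finset (Fin n)) (j : Fin d) : Prop :=
  ∃ i ∈ G, ∃ i' ∈ G, (T i).1 j ≠ (T i').1 j

/-- Number of stars of a partition. -/
noncomputable def stars {n d : ℕ} {V B : Type*} (T : Fin n → (Fin d → V) × B)
    (P : MPartition n) : ℕ :=
  ∑ G ∈ P.groups, G.card * (Finset.univ.filter (fun j : Fin d => Disagrees T G j)).card

/-- Number of suppressed rows of a partition. -/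
noncomputable def supp {n d : ℕ} {V B : Type*} (T : Fin n → (Fin d → V) × B)
    (P : MPartition n) : ℕ :=
  ∑ G ∈ P.groups, if ∃ j : Fin d, Disagrees T G j then G.card else 0

lemma stars_le_d_supp {n d : ℕ} {V B : Type*} (T : Fin n → (Fin d → V) × B)
    (P : MPartition n) : stars T P ≤ d * supp T P := by
  unfold stars supp
  rw [Finset.mul_sum]
  refine Finset.sum_le_sum fun G _ => ?_
  by_cases h : ∃ j : Fin d, Disagrees T G j
  · rw [if_pos h, mul_comm d G.card]
    exact Nat.mul_le_mul_left _ (le_trans (Finset.card_filter_le _ _) (by simp))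
  · rw [if_neg h, mul_zero]
    have : (Finset.univ.filter (fun j : Fin d => Disagrees T G j)) = ∅ := by
      simp only [Finset.filter_eq_empty_iff]
      exact fun j _ => fun hj => h ⟨j, hj⟩
    simp [this]

lemma supp_le_stars {n d : ℕ} {V B : Type*} (T : Fin n → (Fin d → V) × B)
    (P : MPartition n) : supp T P ≤ stars T P := by
  unfold stars supp
  refine Finset.sum_le_sum fun G _ => ?_
  by_cases h : ∃ j : Fin d, Disagrees T G j
  · rw [if_pos h]
    obtain ⟨j, hj⟩ := h
    have : 1 ≤ (Finset.univ.filter (fun j : Fin d => Disagrees T G j)).card :=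
      Finset.card_pos.mpr ⟨j, by simp [hj]⟩
    nlinarith
  · simp [if_neg h]

theorem stmt3 {n d : ℕ} {V B : Type*} (l : ℕ) (hl : 1 ≤ l) (hd : 1 ≤ d)
    (T : Fin n → (Fin d → V) × B) (lam : ℝ) (hlam : 1 ≤ lam)
    (P₃ : MPartition n) (hP₃ : Diverse l T P₃)
    (happrox : ∀ P : MPartition n, Diverse l T P →
      (supp T P₃ : ℝ) ≤ lam * (supp T P : ℝ)) :
    ∀ P : MPartition n, Diverse l T P →
      (stars T P₃ : ℝ) ≤ lam * (d : ℝ) * (stars T P : ℝ) := by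
  intro P hP
  have h1 : (stars T P₃ : ℝ) ≤ (d : ℝ) * (supp T P₃ : ℝ) := by
    exact_mod_cast stars_le_d_supp T P₃
  have h2 := happrox P hP
  have h3 : (supp T P : ℝ) ≤ (stars T P : ℝ) := by
    exact_mod_cast supp_le_stars T P
  have hd0 : (0:ℝ) ≤ d := Nat.cast_nonneg d
  have hlam0 : (0:ℝ) ≤ lam := le_trans zero_le_one hlam
  calc (stars T P₃ : ℝ) ≤ (d:ℝ) * (supp T P₃ : ℝ) := h1
    _ ≤ (d:ℝ) * (lam * (supp T P : ℝ)) := by exact mul_le_mul_of_nonneg_left h2 hd0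
    _ ≤ (d:ℝ) * (lam * (stars T P : ℝ)) := by
        exact mul_le_mul_of_nonneg_left (mul_le_mul_of_nonneg_left h3 hlam0) hd0
    _ = lam * (d:ℝ) * (stars T P : ℝ) := by ring
end

section
/- In the table T constructed from a 3DM instance, for every attribute index i ∈ Fin d there are exactly 3 rows of T whose QI value on attribute A_i is 0, namely the rows (k, a) with a equal to the k-th coordinate of p(i) for k ∈ Fin 3. -/
/-- The `k`-th coordinate (`k ∈ Fin 3`) of a 3D point. -/
def coord3 {n : ℕ} (k : Fin 3) (q : Fin n × Fin n × Fin n) : Fin n :=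
  if k = 0 then q.1 else if k = 1 then q.2.1 else q.2.2

/-- The QI value of row `r = (k, a)` of the constructed table on attribute `A_i`:
it is `0` if the `k`-th coordinate of `p i` equals `a`, and `u r` otherwise. -/
def qiT {n d m : ℕ} (p : Fin d → Fin n × Fin n × Fin n)
    (u : Fin 3 × Fin n → Fin (m + 1)) (r : Fin 3 × Fin n) (i : Fin d) : Fin (m + 1) :=
  if coord3 r.1 (p i) = r.2 then 0 else u r

theorem stmt4 {n d m : ℕ} (hn : 1 ≤ n) (hnd : n ≤ d) (hm3 : 3 ≤ m) (hm : m ≤ 3 * n)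
    (p : Fin d → Fin n × Fin n × Fin n) (hp : Function.Injective p)
    (u : Fin 3 × Fin n → Fin (m + 1))
    (hu0 : ∀ r, u r ≠ 0)
    (husurj : ∀ v : Fin (m + 1), v ≠ 0 → ∃ r, u r = v)
    (hudiff : ∀ k k' : Fin 3, ∀ a a' : Fin n, k ≠ k' → u (k, a) ≠ u (k', a'))
    (i : Fin d) :
    Finset.univ.filter (fun r : Fin 3 × Fin n => qiT p u r i = 0) =
      Finset.univ.image (fun k : Fin 3 => (k, coord3 k (p i))) ∧
    (Finset.univ.filter (fun r : Fin 3 × Fin n => qiT p u r i = 0)).card = 3 := by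
  have hset : Finset.univ.filter (fun r : Fin 3 × Fin n => qiT p u r i = 0) =
      Finset.univ.image (fun k : Fin 3 => (k, coord3 k (p i))) := by
    ext r
    simp only [Finset.mem_filter, Finset.mem_univ, true_and, Finset.mem_image, qiT]
    constructor
    · intro h
      by_cases hc : coord3 r.1 (p i) = r.2
      · exact ⟨r.1, by rw [hc]⟩
      · exact absurd (by simpa [hc] using h) (hu0 r)
    · rintro ⟨k, rfl⟩
      simp
  refine ⟨hset, ?_⟩
  rw [hset, Finset.card_image_of_injective _ (fun a b h => (Prod.mk.injEq _ _ _ _ ▸ h).1)]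
  simp
end

section
/- Let P be a 3-diverse partition of the rows of the constructed table T, and let G be a useful QI-group of P. Then every non-star QI value of G is 0; that is, for every attribute A_i on which all rows of G agree, the common QI value is 0. -/
open scoped Classical

/-- A partition of the row set `Fin 3 × Fin n` into pairwise disjoint nonempty
QI-groups covering all rows. -/
structure RPartition (n : ℕ) where
  groups : Finset (Finset (Fin 3 × Fin n))
  nonempty : ∀ G ∈ groups, G.Nonempty
  pairwiseDisjoint : (groups : Set (Finset (Fin 3 × Fin n))).PairwiseDisjoint id
  covers : ∀ r : Fin 3 × Fin n, ∃ G ∈ groups, r ∈ G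

/-- A group `G` disagrees on attribute `A_i` if two of its rows have different
QI values on `A_i`. -/
def Disagrees3 {n d m : ℕ} (p : Fin d → Fin n × Fin n × Fin n)
    (u : Fin 3 × Fin n → Fin (m + 1)) (G : Finset (Fin 3 × Fin n)) (i : Fin d) : Prop :=
  ∃ r ∈ G, ∃ r' ∈ G, qiT p u r i ≠ qiT p u r' i

/-- A group is useful if there is at least one attribute on which it does not
disagree (i.e., it is not futile). -/
def Useful3 {n d m : ℕ} (p : Fin d → Fin n × Fin n × Fin n)
    (u : Fin 3 × Fin n → Fin (m + 1)) (G : Finset (Fin 3 × Fin n)) : Prop :=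
  ∃ i : Fin d, ¬ Disagrees3 p u G i

/-- A group `G` is 3-eligible if for every sensitive value `v`,
`3` times the number of rows of `G` with sensitive value `v` is at most `|G|`. -/
def Eligible3 {n m : ℕ} (u : Fin 3 × Fin n → Fin (m + 1))
    (G : Finset (Fin 3 × Fin n)) : Prop :=
  ∀ v : Fin (m + 1), 3 * (G.filter (fun r => u r = v)).card ≤ G.card

/-- A partition is 3-diverse if every one of its QI-groups is 3-eligible. -/
def Diverse3 {n m : ℕ} (u : Fin 3 × Fin n → Fin (m + 1)) (P : RPartition n) : Prop :=
  ∀ G ∈ P.groups, Eligible3 u G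

/-- Number of stars of a partition of the constructed table. -/
noncomputable def stars3 {n d m : ℕ} (p : Fin d → Fin n × Fin n × Fin n)
    (u : Fin 3 × Fin n → Fin (m + 1)) (P : RPartition n) : ℕ :=
  ∑ G ∈ P.groups, G.card * (Finset.univ.filter (fun i : Fin d => Disagrees3 p u G i)).card

theorem stmt5 {n d m : ℕ} (hn : 1 ≤ n) (hnd : n ≤ d) (hm3 : 3 ≤ m) (hm : m ≤ 3 * n)
    (p : Fin d → Fin n × Fin n × Fin n) (hp : Function.Injective p)
    (u : Fin 3 × Fin n → Fin (m + 1))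
    (hu0 : ∀ r, u r ≠ 0)
    (husurj : ∀ v : Fin (m + 1), v ≠ 0 → ∃ r, u r = v)
    (hudiff : ∀ k k' : Fin 3, ∀ a a' : Fin n, k ≠ k' → u (k, a) ≠ u (k', a'))
    (P : RPartition n) (hP : Diverse3 u P)
    (G : Finset (Fin 3 × Fin n)) (hG : G ∈ P.groups) (huseful : Useful3 p u G) :
    ∀ i : Fin d, ¬ Disagrees3 p u G i → ∀ r ∈ G, qiT p u r i = 0 := by
  intro i hnd0 r hr
  by_contra hne
  -- all rows agree with r's value
  have hag : ∀ r' ∈ G, qiT p u r' i = qiT p u r i := by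
    intro r' hr'
    by_contra h
    exact hnd0 ⟨r', hr', r, hr, h⟩
  -- since the common value is nonzero, every row has u r' = qiT p u r i
  set v := qiT p u r i with hv
  have hall : ∀ r' ∈ G, u r' = v := by
    intro r' hr'
    have h := hag r' hr'
    unfold qiT at h
    split_ifs at h with hc
    · exact absurd h.symm hne
    · exact h
  have helig := hP G hG v
  have hfilt : G.filter (fun r' => u r' = v) = G :=
    Finset.filter_true_of_mem hall
  rw [hfilt] at helig
  have hpos : 0 < G.card := Finset.card_pos.mpr ⟨r, hr⟩
  omega
end

section
/- Let P be a 3-diverse partition of the rows of the constructed table T, and let G be a useful QI-group of P. Then (i) G contains exactly 3 rows, (ii) G agrees on exactly one attribute and disagrees on the remaining d−1 attributes, so G contributes exactly 3(d−1) stars, and (iii) the common value on the unique agreed attribute is 0, so G contains exactly 3 zero (non-star) entries. -/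
open scoped Classical

theorem stmt6 {n d m : ℕ} (hn : 1 ≤ n) (hnd : n ≤ d) (hm3 : 3 ≤ m) (hm : m ≤ 3 * n)
    (p : Fin d → Fin n × Fin n × Fin n) (hp : Function.Injective p)
    (u : Fin 3 × Fin n → Fin (m + 1))
    (hu0 : ∀ r, u r ≠ 0)
    (husurj : ∀ v : Fin (m + 1), v ≠ 0 → ∃ r, u r = v)
    (hudiff : ∀ k k' : Fin 3, ∀ a a' : Fin n, k ≠ k' → u (k, a) ≠ u (k', a'))
    (P : RPartition n) (hP : Diverse3 u P)
    (G : Finset (Fin 3 × Fin n)) (hG : G ∈ P.groups) (huseful : Useful3 p u G) :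
    -- (i) G contains exactly 3 rows
    G.card = 3 ∧
    -- (ii) G agrees on exactly one attribute, disagrees on the other d − 1,
    -- hence contributes exactly 3(d − 1) stars
    (Finset.univ.filter (fun i : Fin d => ¬ Disagrees3 p u G i)).card = 1 ∧
    (Finset.univ.filter (fun i : Fin d => Disagrees3 p u G i)).card = d - 1 ∧
    G.card * (Finset.univ.filter (fun i : Fin d => Disagrees3 p u G i)).card = 3 * (d - 1) ∧
    -- (iii) the common value on every agreed attribute is 0, so G contains
    -- exactly 3 zero (non-star) entries
    (∀ i : Fin d, ¬ Disagrees3 p u G i → ∀ r ∈ G, qiT p u r i = 0) ∧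
    (∑ r ∈ G, (Finset.univ.filter (fun i : Fin d => ¬ Disagrees3 p u G i ∧
      qiT p u r i = 0)).card) = 3 := by
  classical
  obtain ⟨i0, hi0⟩ := huseful
  obtain ⟨r0, hr0⟩ := P.nonempty G hG
  have helig := hP G hG
  have hGpos : 0 < G.card := Finset.card_pos.mpr ⟨r0, hr0⟩
  have hagree : ∀ i : Fin d, ¬ Disagrees3 p u G i → ∀ r ∈ G, ∀ r' ∈ G,
      qiT p u r i = qiT p u r' i := by
    intro i hi r hr r' hr'
    by_contra h
    exact hi ⟨r, hr, r', hr', h⟩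
  -- the common value on an agreed attribute is 0
  have hzero : ∀ i : Fin d, ¬ Disagrees3 p u G i → ∀ r ∈ G, qiT p u r i = 0 := by
    intro i hi r hr
    by_contra hne
    have hall : ∀ r' ∈ G, u r' = qiT p u r i := by
      intro r' hr'
      have h1 : qiT p u r' i = qiT p u r i := hagree i hi r' hr' r hr
      have h2 : qiT p u r' i ≠ 0 := by rw [h1]; exact hne
      by_cases hc : coord3 r'.1 (p i) = r'.2
      · exact absurd (by simp [qiT, hc]) h2
      · rw [← h1]; simp [qiT, hc]
    have hfil : G.filter (fun r' => u r' = qiT p u r i) = G :=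
      Finset.filter_true_of_mem hall
    have := helig (qiT p u r i)
    rw [hfil] at this
    omega
  have hcoord : ∀ i : Fin d, ¬ Disagrees3 p u G i → ∀ r ∈ G,
      coord3 r.1 (p i) = r.2 := by
    intro i hi r hr
    have h := hzero i hi r hr
    by_cases hc : coord3 r.1 (p i) = r.2
    · exact hc
    · simp [qiT, hc] at h
      exact absurd h (hu0 r)
  have hsub : ∀ i : Fin d, ¬ Disagrees3 p u G i →
      G ⊆ Finset.univ.image (fun k : Fin 3 => (k, coord3 k (p i))) := by
    intro i hi r hr
    refine Finset.mem_image.mpr ⟨r.1, Finset.mem_univ _, ?_⟩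
    rw [hcoord i hi r hr]
  have hcard_le : G.card ≤ 3 := by
    have := Finset.card_le_card (hsub i0 hi0)
    calc G.card ≤ _ := this
      _ ≤ (Finset.univ : Finset (Fin 3)).card := Finset.card_image_le
      _ = 3 := by simp
  have hcard_ge : 3 ≤ G.card := by
    have h1 := helig (u r0)
    have h2 : 1 ≤ (G.filter (fun r => u r = u r0)).card :=
      Finset.card_pos.mpr ⟨r0, Finset.mem_filter.mpr ⟨hr0, rfl⟩⟩
    omega
  have hcard3 : G.card = 3 := le_antisymm hcard_le hcard_ge
  have hGeq : ∀ i : Fin d, ¬ Disagrees3 p u G i →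
      G = Finset.univ.image (fun k : Fin 3 => (k, coord3 k (p i))) := by
    intro i hi
    refine Finset.eq_of_subset_of_card_le (hsub i hi) ?_
    calc (Finset.univ.image (fun k : Fin 3 => (k, coord3 k (p i)))).card
        ≤ (Finset.univ : Finset (Fin 3)).card := Finset.card_image_le
      _ = 3 := by simp
      _ = G.card := hcard3.symm
  have huniq : ∀ i : Fin d, ¬ Disagrees3 p u G i → i = i0 := by
    intro i hi
    have e := (hGeq i hi).symm.trans (hGeq i0 hi0)
    have hcoordeq : ∀ k : Fin 3, coord3 k (p i) = coord3 k (p i0) := by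
      intro k
      have hk : (k, coord3 k (p i)) ∈
          Finset.univ.image (fun k : Fin 3 => (k, coord3 k (p i0))) := by
        rw [← e]
        exact Finset.mem_image.mpr ⟨k, Finset.mem_univ _, rfl⟩
      obtain ⟨k', -, hk'⟩ := Finset.mem_image.mp hk
      have hk1 : k' = k := congrArg Prod.fst hk'
      have hk2 := congrArg Prod.snd hk'
      simp only at hk2
      rw [← hk2, hk1]
    have h0 := hcoordeq 0
    have h1 := hcoordeq 1
    have h2 := hcoordeq 2
    simp only [coord3] at h0 h1 h2
    norm_num at h0 h1 h2
    apply hp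
    exact Prod.ext h0 (Prod.ext h1 h2)
  have hfilne : Finset.univ.filter (fun i : Fin d => ¬ Disagrees3 p u G i) = {i0} := by
    ext j
    simp only [Finset.mem_filter, Finset.mem_univ, true_and, Finset.mem_singleton]
    constructor
    · exact huniq j
    · rintro rfl; exact hi0
  have hcardne : (Finset.univ.filter (fun i : Fin d => ¬ Disagrees3 p u G i)).card = 1 := by
    rw [hfilne]; simp
  have hsum := Finset.card_filter_add_card_filter_not
    (s := (Finset.univ : Finset (Fin d))) (p := fun i => Disagrees3 p u G i)
  rw [Finset.card_univ, Fintype.card_fin] at hsum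
  have hcardd : (Finset.univ.filter (fun i : Fin d => Disagrees3 p u G i)).card = d - 1 := by
    omega
  refine ⟨hcard3, hcardne, hcardd, by rw [hcard3, hcardd], hzero, ?_⟩
  have hrow : ∀ r ∈ G, (Finset.univ.filter (fun i : Fin d => ¬ Disagrees3 p u G i ∧
      qiT p u r i = 0)) = {i0} := by
    intro r hr
    ext j
    simp only [Finset.mem_filter, Finset.mem_univ, true_and, Finset.mem_singleton]
    constructor
    · rintro ⟨h1, -⟩; exact huniq j h1
    · rintro rfl; exact ⟨hi0, hzero _ hi0 r hr⟩
  calc (∑ r ∈ G, (Finset.univ.filter (fun i : Fin d => ¬ Disagrees3 p u G i ∧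
        qiT p u r i = 0)).card)
      = ∑ r ∈ G, 1 := Finset.sum_congr rfl (fun r hr => by rw [hrow r hr]; simp)
    _ = G.card := Finset.sum_const 1 ▸ by simp
    _ = 3 := hcard3
end

section
/- Every 3-diverse partition P of the rows of the constructed table T has at least 3n(d−1) stars: stars(P) ≥ 3n(d−1). -/
open scoped Classical

theorem stmt7 {n d m : ℕ} (hn : 1 ≤ n) (hnd : n ≤ d) (hm3 : 3 ≤ m) (hm : m ≤ 3 * n)
    (p : Fin d → Fin n × Fin n × Fin n) (hp : Function.Injective p)
    (u : Fin 3 × Fin n → Fin (m + 1))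
    (hu0 : ∀ r, u r ≠ 0)
    (husurj : ∀ v : Fin (m + 1), v ≠ 0 → ∃ r, u r = v)
    (hudiff : ∀ k k' : Fin 3, ∀ a a' : Fin n, k ≠ k' → u (k, a) ≠ u (k', a'))
    (P : RPartition n) (hP : Diverse3 u P) :
    3 * n * (d - 1) ≤ stars3 p u P := by
  classical
  -- Each group disagrees on at least d - 1 attributes.
  have key : ∀ G ∈ P.groups,
      d - 1 ≤ (Finset.univ.filter (fun i : Fin d => Disagrees3 p u G i)).card := by
    intro G hG
    have hE := hP G hG
    have hne := P.nonempty G hG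
    have hpos : 0 < G.card := Finset.card_pos.mpr hne
    -- at least 3 distinct sensitive values in G
    have hcard : G.card = ∑ v ∈ G.image u, (G.filter fun r => u r = v).card :=
      Finset.card_eq_sum_card_image u G
    have h3 : 2 < (G.image u).card := by
      by_contra h
      push_neg at h
      have h1 : 3 * G.card ≤ (G.image u).card * G.card := by
        calc 3 * G.card = ∑ v ∈ G.image u, 3 * (G.filter fun r => u r = v).card := by
              rw [← Finset.mul_sum, ← hcard]
          _ ≤ ∑ _v ∈ G.image u, G.card := Finset.sum_le_sum fun v _ => hE v
          _ = (G.image u).card * G.card := by rw [Finset.sum_const, smul_eq_mul]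
      nlinarith
    obtain ⟨v1, v2, v3, hv1, hv2, hv3, h12, h13, h23⟩ := Finset.two_lt_card_iff.mp h3
    obtain ⟨r1, hr1, hur1⟩ := Finset.mem_image.mp hv1
    obtain ⟨r2, hr2, hur2⟩ := Finset.mem_image.mp hv2
    obtain ⟨r3, hr3, hur3⟩ := Finset.mem_image.mp hv3
    have hu12 : u r1 ≠ u r2 := by rw [hur1, hur2]; exact h12
    have hu13 : u r1 ≠ u r3 := by rw [hur1, hur3]; exact h13
    have hu23 : u r2 ≠ u r3 := by rw [hur2, hur3]; exact h23
    -- on any agreeing attribute, rows with distinct sensitive values match their coord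
    have agree : ∀ i : Fin d, ¬ Disagrees3 p u G i → ∀ r ∈ G, ∀ r' ∈ G, u r ≠ u r' →
        coord3 r.1 (p i) = r.2 ∧ coord3 r'.1 (p i) = r'.2 := by
      intro i hi r hr r' hr' hur
      unfold Disagrees3 at hi
      push_neg at hi
      have heq := hi r hr r' hr'
      unfold qiT at heq
      by_cases c1 : coord3 r.1 (p i) = r.2 <;> by_cases c2 : coord3 r'.1 (p i) = r'.2
      · exact ⟨c1, c2⟩
      · rw [if_pos c1, if_neg c2] at heq; exact absurd heq.symm (hu0 r')
      · rw [if_neg c1, if_pos c2] at heq; exact absurd heq (hu0 r)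
      · rw [if_neg c1, if_neg c2] at heq; exact absurd heq hur
    -- the rows r1 r2 r3 have pairwise distinct first coordinates
    have hk : ∀ i : Fin d, ¬ Disagrees3 p u G i →
        ∀ k : Fin 3, coord3 k (p i) =
          (if k = r1.1 then r1.2 else if k = r2.1 then r2.2 else r3.2) := by
      intro i hi k
      obtain ⟨c1, c2⟩ := agree i hi r1 hr1 r2 hr2 hu12
      obtain ⟨_, c3⟩ := agree i hi r1 hr1 r3 hr3 hu13
      have hk12 : r1.1 ≠ r2.1 := by
        intro h
        apply hu12
        have : r1 = r2 := by
          apply Prod.ext h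
          rw [← c1, ← c2, h]
        rw [this]
      have hk13 : r1.1 ≠ r3.1 := by
        intro h
        apply hu13
        have : r1 = r3 := by
          apply Prod.ext h
          rw [← c1, ← c3, h]
        rw [this]
      have hk23 : r2.1 ≠ r3.1 := by
        intro h
        apply hu23
        have : r2 = r3 := by
          apply Prod.ext h
          rw [← c2, ← c3, h]
        rw [this]
      have hall : k = r1.1 ∨ k = r2.1 ∨ k = r3.1 := by
        have b0 := k.isLt
        have b1 := r1.1.isLt
        have b2 := r2.1.isLt
        have b3 := r3.1.isLt
        have e12 : r1.1.val ≠ r2.1.val := fun h => hk12 (Fin.ext h)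
        have e13 : r1.1.val ≠ r3.1.val := fun h => hk13 (Fin.ext h)
        have e23 : r2.1.val ≠ r3.1.val := fun h => hk23 (Fin.ext h)
        rcases Nat.lt_or_ge k.val 3 with _ | h
        · simp only [Fin.ext_iff]
          omega
        · omega
      rcases hall with h | h | h
      · rw [if_pos h, h, c1]
      · rw [if_neg (by rw [h]; exact fun hh => hk12 hh.symm), if_pos h, h, c2]
      · rw [if_neg (by rw [h]; exact fun hh => hk13 hh.symm),
          if_neg (by rw [h]; exact fun hh => hk23 hh.symm), h, c3]
    -- at most one agreeing attribute
    have huniq : ∀ i j : Fin d, ¬ Disagrees3 p u G i → ¬ Disagrees3 p u G j → i = j := by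
      intro i j hi hj
      apply hp
      have e : ∀ k : Fin 3, coord3 k (p i) = coord3 k (p j) := by
        intro k; rw [hk i hi k, hk j hj k]
      have e0 := e 0
      have e1 := e 1
      have e2 := e 2
      simp only [coord3, if_pos rfl] at e0
      norm_num [coord3] at e1 e2
      exact Prod.ext e0 (Prod.ext e1 e2)
    have hle1 : (Finset.univ.filter (fun i : Fin d => ¬ Disagrees3 p u G i)).card ≤ 1 := by
      apply Finset.card_le_one.mpr
      intro i hi j hj
      simp only [Finset.mem_filter] at hi hj
      exact huniq i j hi.2 hj.2
    have hsplit := Finset.card_filter_add_card_filter_not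
      (s := (Finset.univ : Finset (Fin d))) (p := fun i => Disagrees3 p u G i)
    rw [Finset.card_univ, Fintype.card_fin] at hsplit
    omega
  -- sum of group sizes is 3n
  have hsum : ∑ G ∈ P.groups, G.card = 3 * n := by
    have hcover : P.groups.biUnion id = Finset.univ := by
      ext r
      simp only [Finset.mem_biUnion, id, Finset.mem_univ, iff_true]
      exact P.covers r
    have hdisj : ∀ G₁ ∈ P.groups, ∀ G₂ ∈ P.groups, G₁ ≠ G₂ → Disjoint G₁ G₂ := by
      intro G₁ h₁ G₂ h₂ hne
      exact P.pairwiseDisjoint h₁ h₂ hne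
    calc ∑ G ∈ P.groups, G.card = (P.groups.biUnion id).card :=
          (Finset.card_biUnion hdisj).symm
      _ = (Finset.univ : Finset (Fin 3 × Fin n)).card := by rw [hcover]
      _ = 3 * n := by simp [Finset.card_univ]
  calc 3 * n * (d - 1) = (∑ G ∈ P.groups, G.card) * (d - 1) := by rw [hsum]
    _ = ∑ G ∈ P.groups, G.card * (d - 1) := Finset.sum_mul ..
    _ ≤ stars3 p u P := Finset.sum_le_sum fun G hG =>
        Nat.mul_le_mul_left G.card (key G hG)
end

section
/- The 3DM instance p has a solution (a subset S' ⊆ Fin d with |S'| = n on which each of the three coordinate projections of p is injective) if and only if there exists a 3-diverse partition P of the rows of the constructed table T with exactly 3n(d−1) stars. -/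
open scoped Classical

section aux
variable {n d m : ℕ}

lemma coord3_ext {q q' : Fin n × Fin n × Fin n} (h : ∀ k, coord3 k q = coord3 k q') :
    q = q' := by
  have h0 := h 0; have h1 := h 1; have h2 := h 2
  simp [coord3] at h0 h1 h2
  exact Prod.ext h0 (Prod.ext h1 h2)

def triple3 (p : Fin d → Fin n × Fin n × Fin n) (i : Fin d) : Finset (Fin 3 × Fin n) :=
  Finset.univ.image (fun k : Fin 3 => (k, coord3 k (p i)))

lemma mem_triple3 {p : Fin d → Fin n × Fin n × Fin n} {i : Fin d} {r : Fin 3 × Fin n} :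
    r ∈ triple3 p i ↔ coord3 r.1 (p i) = r.2 := by
  simp only [triple3, Finset.mem_image, Finset.mem_univ, true_and]
  constructor
  · rintro ⟨k, rfl⟩; rfl
  · intro h; exact ⟨r.1, Prod.ext rfl h⟩

lemma card_triple3 (p : Fin d → Fin n × Fin n × Fin n) (i : Fin d) :
    (triple3 p i).card = 3 := by
  rw [triple3, Finset.card_image_of_injective _ (fun a b h => congrArg Prod.fst h)]
  simp

lemma triple3_inj {p : Fin d → Fin n × Fin n × Fin n} (hp : Function.Injective p)
    {i j : Fin d} (h : triple3 p i = triple3 p j) : i = j := by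
  apply hp
  apply coord3_ext
  intro k
  have : (k, coord3 k (p i)) ∈ triple3 p j := by
    rw [← h, mem_triple3]
  rw [mem_triple3] at this
  exact this.symm

lemma not_disagrees_self {p : Fin d → Fin n × Fin n × Fin n}
    {u : Fin 3 × Fin n → Fin (m + 1)} {i : Fin d} :
    ¬ Disagrees3 p u (triple3 p i) i := by
  rintro ⟨r, hr, r', hr', hne⟩
  rw [mem_triple3] at hr hr'
  exact hne (by simp [qiT, hr, hr'])

lemma disagrees_triple {p : Fin d → Fin n × Fin n × Fin n} (hp : Function.Injective p)
    {u : Fin 3 × Fin n → Fin (m + 1)}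
    (hu0 : ∀ r, u r ≠ 0)
    (hudiff : ∀ k k' : Fin 3, ∀ a a' : Fin n, k ≠ k' → u (k, a) ≠ u (k', a'))
    {i j : Fin d} (hij : j ≠ i) :
    Disagrees3 p u (triple3 p i) j := by
  have hex : ∃ k, coord3 k (p j) ≠ coord3 k (p i) := by
    by_contra hc
    push_neg at hc
    exact hij (hp (coord3_ext hc))
  obtain ⟨k, hk⟩ := hex
  set k' : Fin 3 := if k = 0 then 1 else 0 with hk'
  have hkk' : k ≠ k' := by
    rcases eq_or_ne k 0 with h | h <;> simp [hk', h]
  refine ⟨(k, coord3 k (p i)), by rw [mem_triple3], (k', coord3 k' (p i)), by rw [mem_triple3], ?_⟩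
  unfold qiT
  simp only
  rw [if_neg hk]
  split_ifs with h
  · exact hu0 _
  · exact hudiff k k' _ _ hkk'

lemma filter_disagrees_triple {p : Fin d → Fin n × Fin n × Fin n} (hp : Function.Injective p)
    {u : Fin 3 × Fin n → Fin (m + 1)}
    (hu0 : ∀ r, u r ≠ 0)
    (hudiff : ∀ k k' : Fin 3, ∀ a a' : Fin n, k ≠ k' → u (k, a) ≠ u (k', a'))
    (i : Fin d) :
    (Finset.univ.filter (fun j => Disagrees3 p u (triple3 p i) j)).card = d - 1 := by
  have : Finset.univ.filter (fun j => Disagrees3 p u (triple3 p i) j) =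
      Finset.univ.erase i := by
    ext j
    simp only [Finset.mem_filter, Finset.mem_univ, true_and, Finset.mem_erase, and_true]
    constructor
    · intro h hji; exact not_disagrees_self (hji ▸ h)
    · intro h; exact disagrees_triple hp hu0 hudiff h
  rw [this, Finset.card_erase_of_mem (Finset.mem_univ i), Finset.card_univ, Fintype.card_fin]

lemma eligible_triple {p : Fin d → Fin n × Fin n × Fin n}
    {u : Fin 3 × Fin n → Fin (m + 1)}
    (hudiff : ∀ k k' : Fin 3, ∀ a a' : Fin n, k ≠ k' → u (k, a) ≠ u (k', a'))
    (i : Fin d) : Eligible3 u (triple3 p i) := by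
  intro v
  rw [card_triple3]
  have : ((triple3 p i).filter (fun r => u r = v)).card ≤ 1 := by
    rw [Finset.card_le_one]
    rintro ⟨k, a⟩ ha ⟨k', a'⟩ hb
    simp only [Finset.mem_filter, mem_triple3] at ha hb
    have hkk : k = k' := by
      by_contra hne
      exact hudiff k k' a a' hne (ha.2.trans hb.2.symm)
    subst hkk
    rw [Prod.mk.injEq]
    exact ⟨rfl, ha.1.symm.trans hb.1⟩
  omega

lemma card_ge_three {G : Finset (Fin 3 × Fin n)} {u : Fin 3 × Fin n → Fin (m + 1)}
    (hel : Eligible3 u G) (hne : G.Nonempty) : 3 ≤ G.card := by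
  obtain ⟨r0, hr0⟩ := hne
  have h1 : 1 ≤ (G.filter (fun r => u r = u r0)).card :=
    Finset.card_pos.mpr ⟨r0, Finset.mem_filter.mpr ⟨hr0, rfl⟩⟩
  have := hel (u r0)
  omega

lemma eq_triple_of_agree {p : Fin d → Fin n × Fin n × Fin n}
    {u : Fin 3 × Fin n → Fin (m + 1)} (hu0 : ∀ r, u r ≠ 0)
    {G : Finset (Fin 3 × Fin n)} (hel : Eligible3 u G) (hne : G.Nonempty)
    {i : Fin d} (h : ¬ Disagrees3 p u G i) : G = triple3 p i := by
  unfold Disagrees3 at h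
  push_neg at h
  have hsub : G ⊆ triple3 p i := by
    obtain ⟨r0, hr0⟩ := hne
    by_cases h0 : qiT p u r0 i = 0
    · intro r hr
      rw [mem_triple3]
      have hq : qiT p u r i = 0 := (h r hr r0 hr0 |>.trans h0)
      unfold qiT at hq
      split_ifs at hq with hc
      · exact hc
      · exact absurd hq (hu0 r)
    · exfalso
      have hall : ∀ r ∈ G, u r = u r0 := by
        intro r hr
        have hq := h r hr r0 hr0
        have h0' : qiT p u r i ≠ 0 := fun hz => h0 (hq ▸ hz)
        have e1 : qiT p u r i = u r := by
          by_cases hc : coord3 r.1 (p i) = r.2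
          · exact absurd (by simp [qiT, hc]) h0'
          · simp [qiT, hc]
        have e2 : qiT p u r0 i = u r0 := by
          by_cases hc : coord3 r0.1 (p i) = r0.2
          · exact absurd (by simp [qiT, hc]) h0
          · simp [qiT, hc]
        rw [← e1, hq, e2]
      have hfe : G.filter (fun r => u r = u r0) = G := Finset.filter_eq_self.mpr hall
      have hG1 : 1 ≤ G.card := Finset.card_pos.mpr ⟨r0, hr0⟩
      have h3 := hel (u r0)
      rw [hfe] at h3
      omega
  exact Finset.eq_of_subset_of_card_le hsub
    (by rw [card_triple3]; exact card_ge_three hel hne)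

end aux

theorem stmt8 {n d m : ℕ} (hn : 1 ≤ n) (hnd : n ≤ d) (hm3 : 3 ≤ m) (hm : m ≤ 3 * n)
    (p : Fin d → Fin n × Fin n × Fin n) (hp : Function.Injective p)
    (u : Fin 3 × Fin n → Fin (m + 1))
    (hu0 : ∀ r, u r ≠ 0)
    (husurj : ∀ v : Fin (m + 1), v ≠ 0 → ∃ r, u r = v)
    (hudiff : ∀ k k' : Fin 3, ∀ a a' : Fin n, k ≠ k' → u (k, a) ≠ u (k', a')) :
    (∃ S' : Finset (Fin d), S'.card = n ∧
        ∀ k : Fin 3, Set.InjOn (fun i => coord3 k (p i)) (S' : Set (Fin d))) ↔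
      (∃ P : RPartition n, Diverse3 u P ∧ stars3 p u P = 3 * n * (d - 1)) := by
  constructor
  · rintro ⟨S', hcard, hinj⟩
    refine ⟨⟨S'.image (triple3 p), ?_, ?_, ?_⟩, ?_, ?_⟩
    · intro G hG
      obtain ⟨i, _, rfl⟩ := Finset.mem_image.mp hG
      exact ⟨(0, coord3 0 (p i)), by rw [mem_triple3]⟩
    · rintro G hG G' hG' hne
      rw [Finset.mem_coe, Finset.mem_image] at hG hG'
      obtain ⟨i, hi, rfl⟩ := hG
      obtain ⟨j, hj, rfl⟩ := hG'
      change Disjoint (triple3 p i) (triple3 p j)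
      rw [Finset.disjoint_left]
      intro r hr hr'
      rw [mem_triple3] at hr hr'
      exact hne (congrArg (triple3 p)
        (hinj r.1 (Finset.mem_coe.mpr hi) (Finset.mem_coe.mpr hj) (hr.trans hr'.symm)))
    · rintro ⟨k, a⟩
      have himg : S'.image (fun i => coord3 k (p i)) = Finset.univ :=
        Finset.eq_univ_of_card _
          (by rw [Finset.card_image_of_injOn (hinj k), hcard, Fintype.card_fin])
      have ha : a ∈ S'.image (fun i => coord3 k (p i)) := himg ▸ Finset.mem_univ a
      obtain ⟨i, hi, hia⟩ := Finset.mem_image.mp ha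
      exact ⟨triple3 p i, Finset.mem_image_of_mem _ hi, by rw [mem_triple3]; exact hia⟩
    · intro G hG
      obtain ⟨i, _, rfl⟩ := Finset.mem_image.mp hG
      exact eligible_triple hudiff i
    · unfold stars3
      rw [Finset.sum_image (fun i hi j hj h => triple3_inj hp h)]
      rw [Finset.sum_congr rfl (fun i (_ : i ∈ S') => by
        rw [card_triple3, filter_disagrees_triple hp hu0 hudiff])]
      rw [Finset.sum_const, hcard, smul_eq_mul, ← mul_assoc, mul_comm n 3]
  · rintro ⟨P, hdiv, hstars⟩
    have hd1 : 1 ≤ d := le_trans hn hnd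
    have hdisj : ∀ G ∈ P.groups, ∀ G' ∈ P.groups, G ≠ G' → Disjoint G G' := by
      intro G hG G' hG' hne
      exact P.pairwiseDisjoint (Finset.mem_coe.mpr hG) (Finset.mem_coe.mpr hG') hne
    have hsumcard : ∑ G ∈ P.groups, G.card = 3 * n := by
      rw [← Finset.card_biUnion hdisj]
      have huniv : P.groups.biUnion (fun x => x) = Finset.univ := by
        apply Finset.eq_univ_of_forall
        intro r
        obtain ⟨G, hG, hr⟩ := P.covers r
        exact Finset.mem_biUnion.mpr ⟨G, hG, hr⟩
      rw [huniv, Finset.card_univ]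
      simp [Fintype.card_prod]
    have hchar : ∀ G ∈ P.groups, (∃ i, G = triple3 p i) ∨
        (Finset.univ.filter (fun i : Fin d => Disagrees3 p u G i)).card = d := by
      intro G hG
      by_cases hU : ∃ i, ¬ Disagrees3 p u G i
      · obtain ⟨i, hi⟩ := hU
        exact Or.inl ⟨i, eq_triple_of_agree hu0 (hdiv G hG) (P.nonempty G hG) hi⟩
      · push_neg at hU
        right
        rw [Finset.filter_true_of_mem (fun i _ => hU i), Finset.card_univ, Fintype.card_fin]
    have hlow : ∀ G ∈ P.groups,
        d - 1 ≤ (Finset.univ.filter (fun i : Fin d => Disagrees3 p u G i)).card := by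
      intro G hG
      rcases hchar G hG with ⟨i, rfl⟩ | h
      · rw [filter_disagrees_triple hp hu0 hudiff]
      · omega
    have heq : ∀ G ∈ P.groups,
        (Finset.univ.filter (fun i : Fin d => Disagrees3 p u G i)).card = d - 1 := by
      have hsum : ∑ G ∈ P.groups, G.card * (d - 1) =
          ∑ G ∈ P.groups, G.card *
            (Finset.univ.filter (fun i : Fin d => Disagrees3 p u G i)).card := by
        rw [← Finset.sum_mul, hsumcard]
        exact hstars.symm
      have hptwise := (Finset.sum_eq_sum_iff_of_le
        (fun G hG => Nat.mul_le_mul_left G.card (hlow G hG))).mp hsum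
      intro G hG
      have hGpos : 0 < G.card := Finset.card_pos.mpr (P.nonempty G hG)
      exact (Nat.eq_of_mul_eq_mul_left hGpos (hptwise G hG)).symm
    have hex : ∀ G ∈ P.groups, ∃ i, G = triple3 p i := by
      intro G hG
      rcases hchar G hG with h | h
      · exact h
      · exfalso; have := heq G hG; omega
    choose f hf using hex
    set S' : Finset (Fin d) := P.groups.attach.image (fun G => f G.1 G.2) with hS'
    have hinjf : Set.InjOn (fun G : {x // x ∈ P.groups} => f G.1 G.2)
        (P.groups.attach : Set _) := by
      intro G _ G' _ h
      apply Subtype.ext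
      rw [hf G.1 G.2, hf G'.1 G'.2]
      simp only at h
      rw [h]
    have hcard3 : ∀ G ∈ P.groups, G.card = 3 := by
      intro G hG
      rw [hf G hG, card_triple3]
    have hng : P.groups.card = n := by
      have h3 : ∑ G ∈ P.groups, G.card = ∑ G ∈ P.groups, 3 :=
        Finset.sum_congr rfl hcard3
      rw [h3, Finset.sum_const, smul_eq_mul] at hsumcard
      omega
    refine ⟨S', ?_, ?_⟩
    · rw [hS', Finset.card_image_of_injOn hinjf, Finset.card_attach, hng]
    · intro k i hi j hj hco
      rw [Finset.mem_coe, hS', Finset.mem_image] at hi hj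
      obtain ⟨⟨G, hG⟩, -, rfl⟩ := hi
      obtain ⟨⟨G', hG'⟩, -, rfl⟩ := hj
      simp only at hco
      have hGt : G = triple3 p (f G hG) := hf G hG
      have hGt' : G' = triple3 p (f G' hG') := hf G' hG'
      set i := f G hG with hi'
      set j := f G' hG' with hj'
      clear_value i j
      have h1 : (k, coord3 k (p i)) ∈ G := by rw [hGt, mem_triple3]
      have h2 : (k, coord3 k (p i)) ∈ G' := by
        rw [hGt', mem_triple3]; exact hco.symm
      have hGG : G = G' := by
        by_contra hne
        exact Finset.disjoint_left.mp (hdisj G hG G' hG' hne) h1 h2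
      exact triple3_inj hp (hGt.symm.trans (hGG.trans hGt'))
end

section
/- For every finite multiset Q over B there exists an l-eligible sub-multiset Q̇ ≤ Q that pointwise dominates every l-eligible sub-multiset of Q: for every l-eligible multiset Q' ≤ Q and every b : B, the multiplicity of b in Q' is at most the multiplicity of b in Q̇. (Q̇ is the output of phase one of the algorithm applied to QI-group Q.) -/
/-- A finite multiset `S` over `B` is `l`-eligible if for every `b : B`,
`l` times the multiplicity of `b` in `S` is at most the cardinality of `S`. -/
def MEligible {B : Type*} [DecidableEq B] (l : ℕ) (S : Multiset B) : Prop :=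
  ∀ b : B, l * S.count b ≤ Multiset.card S

/-- The pillar height of `S`: the maximum multiplicity of any element of `S`
(`0` for the empty multiset). -/
def pillarHeight {B : Type*} [DecidableEq B] (S : Multiset B) : ℕ :=
  S.toFinset.sup S.count

/-- A pillar of `S` is a value whose multiplicity in `S` equals the (positive)
pillar height of `S`. -/
def IsPillar {B : Type*} [DecidableEq B] (S : Multiset B) (b : B) : Prop :=
  0 < pillarHeight S ∧ S.count b = pillarHeight S

lemma meligible_sup {B : Type*} [DecidableEq B] {l : ℕ} {S T : Multiset B}
    (hS : MEligible l S) (hT : MEligible l T) : MEligible l (S ⊔ T) := by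
  intro b
  have hc : (S ⊔ T).count b = max (S.count b) (T.count b) := Multiset.count_union b S T
  rw [hc]
  rcases le_total (S.count b) (T.count b) with h | h
  · rw [sup_eq_right.mpr h]
    exact (hT b).trans (Multiset.card_le_card le_sup_right)
  · rw [sup_eq_left.mpr h]
    exact (hS b).trans (Multiset.card_le_card le_sup_left)

theorem stmt9 {B : Type*} [DecidableEq B] (l : ℕ) (hl : 1 ≤ l) (Q : Multiset B) :
    ∃ Qdot : Multiset B, Qdot ≤ Q ∧ MEligible l Qdot ∧
      ∀ Q' : Multiset B, Q' ≤ Q → MEligible l Q' →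
        ∀ b : B, Q'.count b ≤ Qdot.count b := by
  classical
  set F : Finset (Multiset B) :=
    Q.powerset.toFinset.filter (fun S => MEligible l S) with hF
  refine ⟨F.sup id, ?_, ?_, ?_⟩
  · refine Finset.sup_le fun S hS => ?_
    simp only [hF, Finset.mem_filter, Multiset.mem_toFinset, Multiset.mem_powerset] at hS
    exact hS.1
  · refine Finset.sup_induction ?_ (fun a ha b hb => meligible_sup ha hb) ?_
    · intro b; simp
    · intro S hS
      simp only [hF, Finset.mem_filter] at hS
      exact hS.2
  · intro Q' hQ' hel b
    refine Multiset.count_le_of_le b (Finset.le_sup (f := id) ?_)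
    simp only [hF, Finset.mem_filter, Multiset.mem_toFinset, Multiset.mem_powerset]
    exact ⟨hQ', hel⟩
end

section
/- For every valid solution (Q'_1,...,Q'_s, R') one has card R' ≥ l · h(Ṙ), where h(Ṙ) is the pillar height of Ṙ. In particular the optimal number of removed tuples OPT satisfies OPT ≥ l · h(Ṙ). -/
theorem stmt11 {B : Type*} [DecidableEq B] (l : ℕ) (hl : 1 ≤ l) {s : ℕ}
    (Q Qdot : Fin s → Multiset B)
    (hle : ∀ i, Qdot i ≤ Q i)
    (helig : ∀ i, MEligible l (Qdot i))
    (hdom : ∀ i, ∀ Q' : Multiset B, Q' ≤ Q i → MEligible l Q' →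
      ∀ b : B, Q'.count b ≤ (Qdot i).count b) :
    ∀ Q' : Fin s → Multiset B, (∀ i, Q' i ≤ Q i) → (∀ i, MEligible l (Q' i)) →
      MEligible l (∑ i, (Q i - Q' i)) →
      l * pillarHeight (∑ i, (Q i - Qdot i)) ≤ Multiset.card (∑ i, (Q i - Q' i)) := by
  intro Q' hle' helig' heligR
  rcases Nat.eq_zero_or_pos (pillarHeight (∑ i, (Q i - Qdot i))) with h0 | hpos
  · simp [h0]
  · have hne : (∑ i, (Q i - Qdot i)).toFinset.Nonempty := by
      by_contra h
      rw [Finset.not_nonempty_iff_eq_empty] at h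
      simp [pillarHeight, h] at hpos
    obtain ⟨b, _, hb⟩ := Finset.exists_mem_eq_sup _ hne (∑ i, (Q i - Qdot i)).count
    have hcount : (∑ i, (Q i - Qdot i)).count b ≤ (∑ i, (Q i - Q' i)).count b := by
      rw [Multiset.count_sum', Multiset.count_sum']
      apply Finset.sum_le_sum
      intro i _
      rw [Multiset.count_sub, Multiset.count_sub]
      have : (Q' i).count b ≤ (Qdot i).count b := hdom i (Q' i) (hle' i) (helig' i) b
      omega
    calc l * pillarHeight (∑ i, (Q i - Qdot i))
        = l * (∑ i, (Q i - Qdot i)).count b := by rw [pillarHeight, hb]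
      _ ≤ l * (∑ i, (Q i - Q' i)).count b := Nat.mul_le_mul_left l hcount
      _ ≤ Multiset.card (∑ i, (Q i - Q' i)) := heligR b
end

section
/- Let k ≥ 1 and let R_0, R_1, ..., R_k be finite multisets over B such that h(R_j) = h(R_0) for all j, card R_{j+1} ≤ card R_j + l for all j < k, R_j is not l-eligible for all j < k, and R_k is l-eligible. Then card R_k ≤ l · h(R_0) + l − 1. (This is the guarantee when the algorithm terminates during phase two: the residue set then has size at most l · h(Ṙ) + l − 1, hence at most OPT + l − 1.) -/
lemma count_le_pillarHeight {B : Type*} [DecidableEq B] (S : Multiset B) (b : B) :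
    S.count b ≤ pillarHeight S := by
  by_cases h : b ∈ S
  · exact Finset.le_sup (f := S.count) (Multiset.mem_toFinset.mpr h)
  · simp [Multiset.count_eq_zero_of_notMem h]

theorem stmt13 {B : Type*} [DecidableEq B] (l : ℕ) (hl : 1 ≤ l)
    (k : ℕ) (hk : 1 ≤ k) (R : ℕ → Multiset B)
    (hpillar : ∀ j ≤ k, pillarHeight (R j) = pillarHeight (R 0))
    (hstep : ∀ j < k, Multiset.card (R (j + 1)) ≤ Multiset.card (R j) + l)
    (hnot : ∀ j < k, ¬ MEligible l (R j))
    (hfinal : MEligible l (R k)) :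
    Multiset.card (R k) ≤ l * pillarHeight (R 0) + l - 1 := by
  obtain ⟨m, rfl⟩ : ∃ m, k = m + 1 := ⟨k - 1, by omega⟩
  have hm : m < m + 1 := Nat.lt_succ_self m
  obtain ⟨b, hb⟩ := not_forall.mp (hnot m hm)
  push_neg at hb
  have h1 : Multiset.card (R m) < l * pillarHeight (R 0) := by
    calc Multiset.card (R m) < l * (R m).count b := hb
    _ ≤ l * pillarHeight (R m) := Nat.mul_le_mul_left l (count_le_pillarHeight _ _)
    _ = l * pillarHeight (R 0) := by rw [hpillar m (by omega)]
  have h2 := hstep m hm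
  omega
end

section
/- Let Q_1,...,Q_s and R be finite multisets over B such that the total multiset T = R + Σ_{i=1}^s Q_i is l-eligible, each Q_i is thin (card Q_i = l · h(Q_i)), and R is not l-eligible (card R < l · h(R)). Then for every pillar p of R there exists some i such that p is not a pillar of Q_i (i.e., it is not the case that Q_i is nonempty and the multiplicity of p in Q_i equals h(Q_i)). -/
theorem stmt14 {B : Type*} [DecidableEq B] (l : ℕ) (hl : 1 ≤ l) {s : ℕ}
    (Q : Fin s → Multiset B) (R : Multiset B)
    (htotal : MEligible l (R + ∑ i, Q i))
    (hthin : ∀ i, Multiset.card (Q i) = l * pillarHeight (Q i))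
    (hR : Multiset.card R < l * pillarHeight R) :
    ∀ p : B, IsPillar R p →
      ∃ i, ¬ (Q i ≠ 0 ∧ (Q i).count p = pillarHeight (Q i)) := by
  intro p hp
  by_contra h
  push_neg at h
  have key := htotal p
  have hcount : (R + ∑ i, Q i).count p = R.count p + ∑ i, (Q i).count p := by
    simp [Multiset.count_sum']
  have hcard : Multiset.card (R + ∑ i, Q i)
      = Multiset.card R + l * ∑ i, pillarHeight (Q i) := by
    rw [Multiset.card_add]
    congr 1
    rw [Finset.mul_sum]
    induction (Finset.univ : Finset (Fin s)) using Finset.induction with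
    | empty => simp
    | insert hx ih => simp_all [hthin]
  rw [hcount, hcard, hp.2] at key
  have hq : ∀ i, (Q i).count p = pillarHeight (Q i) := fun i => (h i).2
  simp only [hq] at key
  rw [mul_add] at key
  omega
end

section
/- Let Q_1,...,Q_s and R be finite multisets over B such that the total multiset T = R + Σ_{i=1}^s Q_i is l-eligible, each Q_i is thin (card Q_i = l · h(Q_i)) and conflicting (some pillar of Q_i is also a pillar of R), and R is not l-eligible (card R < l · h(R)). Then R has at least two pillars: there exist distinct values b₁ ≠ b₂ whose multiplicities in R both equal h(R). -/
theorem stmt15 {B : Type*} [DecidableEq B] (l : ℕ) (hl : 1 ≤ l) {s : ℕ}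
    (Q : Fin s → Multiset B) (R : Multiset B)
    (htotal : MEligible l (R + ∑ i, Q i))
    (hthin : ∀ i, Multiset.card (Q i) = l * pillarHeight (Q i))
    (hconf : ∀ i, ∃ p : B, IsPillar (Q i) p ∧ IsPillar R p)
    (hR : Multiset.card R < l * pillarHeight R) :
    ∃ b₁ b₂ : B, b₁ ≠ b₂ ∧ R.count b₁ = pillarHeight R ∧ R.count b₂ = pillarHeight R := by
  by_contra hcon
  push_neg at hcon
  have hpos : 0 < pillarHeight R := by
    by_contra h0
    rw [not_lt, Nat.le_zero] at h0
    rw [h0, Nat.mul_zero] at hR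
    exact Nat.not_lt_zero _ hR
  have hne : R.toFinset.Nonempty := by
    rcases eq_or_ne R 0 with h | h
    · simp [pillarHeight, h] at hpos
    · obtain ⟨a, ha⟩ := Multiset.exists_mem_of_ne_zero h
      exact ⟨a, Multiset.mem_toFinset.mpr ha⟩
  obtain ⟨b, hb, hbeq⟩ := Finset.exists_mem_eq_sup R.toFinset hne R.count
  have hbc : R.count b = pillarHeight R := hbeq.symm
  have hQb : ∀ i, (Q i).count b = pillarHeight (Q i) := by
    intro i
    obtain ⟨p, hpQ, hpR⟩ := hconf i
    have hpb : p = b := by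
      by_contra hpb
      exact hcon p b hpb hpR.2 hbc
    rw [← hpb]; exact hpQ.2
  have key := htotal b
  rw [Multiset.count_add, Multiset.count_sum', Multiset.card_add] at key
  have hcards : Multiset.card (∑ i, Q i) = ∑ i, Multiset.card (Q i) := by
    exact map_sum Multiset.cardHom Q Finset.univ
  rw [hcards, hbc] at key
  have hsum : ∀ i ∈ Finset.univ, (Q i).count b = pillarHeight (Q i) :=
    fun i _ => hQb i
  rw [Finset.sum_congr rfl hsum, Nat.mul_add, Finset.mul_sum] at key
  have hsum2 : ∑ i, l * pillarHeight (Q i) = ∑ i, Multiset.card (Q i) :=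
    Finset.sum_congr rfl fun i _ => (hthin i).symm
  rw [hsum2] at key
  omega
end

section
/- Fix l = 2. Let Q_1,...,Q_s and R be finite multisets over B such that the total multiset T = R + Σ_{i=1}^s Q_i is 2-eligible and each Q_i is thin (card Q_i = 2 · h(Q_i)) and conflicting (some pillar of Q_i is also a pillar of R). Then R is 2-eligible, i.e., card R ≥ 2 · h(R). (Hence for l = 2 the algorithm always terminates during the first two phases.) -/
theorem stmt16 {B : Type*} [DecidableEq B] {s : ℕ}
    (Q : Fin s → Multiset B) (R : Multiset B)
    (htotal : MEligible 2 (R + ∑ i, Q i))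
    (hthin : ∀ i, Multiset.card (Q i) = 2 * pillarHeight (Q i))
    (hconf : ∀ i, ∃ p : B, IsPillar (Q i) p ∧ IsPillar R p) :
    2 * pillarHeight R ≤ Multiset.card R := by
  rcases Nat.eq_zero_or_pos (pillarHeight R) with h0 | hpos
  · simp [h0]
  · have hne : R.toFinset.Nonempty := by
      by_contra hemp
      rw [Finset.not_nonempty_iff_eq_empty] at hemp
      have : pillarHeight R = 0 := by simp [pillarHeight, hemp]
      omega
    obtain ⟨p, hpmem, hpeq⟩ := Finset.exists_mem_eq_sup R.toFinset hne R.count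
    have hpcount : R.count p = pillarHeight R := hpeq.symm
    by_cases hq : ∃ q, q ≠ p ∧ R.count q = pillarHeight R
    · obtain ⟨q, hqp, hqc⟩ := hq
      have hle : Multiset.replicate (pillarHeight R) p
          + Multiset.replicate (pillarHeight R) q ≤ R := by
        rw [Multiset.le_iff_count]
        intro b
        simp only [Multiset.count_add, Multiset.count_replicate]
        split_ifs with h1 h2 h3
        · exact absurd (h2.trans h1.symm) hqp
        · subst h1; omega
        · subst h3; omega
        · omega
      have := Multiset.card_le_card hle
      simp only [Multiset.card_add, Multiset.card_replicate] at this
      omega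
    · push_neg at hq
      have hpi : ∀ i, (Q i).count p = pillarHeight (Q i) := by
        intro i
        obtain ⟨pi, hQ, hR⟩ := hconf i
        have : pi = p := by
          by_contra hne'
          exact hq pi hne' hR.2
        rw [← this]; exact hQ.2
      have h1 := htotal p
      have hcount : (R + ∑ i, Q i).count p
          = R.count p + ∑ i, (Q i).count p := by
        simp [Multiset.count_sum']
      have hcard : Multiset.card (R + ∑ i, Q i)
          = Multiset.card R + ∑ i, Multiset.card (Q i) := by
        simp [map_sum Multiset.card Q Finset.univ]
      rw [hcount, hcard] at h1
      have hs1 : ∑ i, (Q i).count p = ∑ i, pillarHeight (Q i) :=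
        Finset.sum_congr rfl fun i _ => hpi i
      have hs2 : ∑ i, Multiset.card (Q i) = 2 * ∑ i, pillarHeight (Q i) := by
        rw [Finset.mul_sum]
        exact Finset.sum_congr rfl fun i _ => hthin i
      rw [hs1, hs2] at h1
      omega
end

section
/- Let T be a microdata table with n rows (n even, n ≥ 2) whose sensitive values lie in a two-element type, with exactly n/2 rows carrying each of the two sensitive values. Then there exists a 2-diverse partition P* of Fin n in which every QI-group consists of exactly 2 rows with different sensitive values, and which is optimal for star minimization: stars(P*) ≤ stars(P) for every 2-diverse partition P of Fin n. -/
open scoped Classical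

lemma pair_decomp {n : ℕ} (p : Fin n → Prop) :
    ∀ G : Finset (Fin n),
      (G.filter p).card = (G.filter (fun i => ¬ p i)).card →
      ∃ Q : Finset (Finset (Fin n)),
        (∀ g ∈ Q, g ⊆ G ∧ g.card = 2 ∧ ∃ i ∈ g, ∃ i' ∈ g, p i ∧ ¬ p i') ∧
        (Q : Set (Finset (Fin n))).PairwiseDisjoint id ∧
        (∀ i ∈ G, ∃ g ∈ Q, i ∈ g) ∧
        ∑ g ∈ Q, g.card = G.card := by
  intro G
  induction G using Finset.strongInduction with
  | _ G ih =>
    intro hcard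
    rcases G.eq_empty_or_nonempty with rfl | hG
    · exact ⟨∅, by simp, by simp, by simp, by simp⟩
    · obtain ⟨x, hx⟩ := hG
      have hpne : (G.filter p).Nonempty := by
        rcases Classical.em (p x) with h | h
        · exact ⟨x, Finset.mem_filter.2 ⟨hx, h⟩⟩
        · have h2 : (G.filter fun i => ¬ p i).Nonempty := ⟨x, Finset.mem_filter.2 ⟨hx, h⟩⟩
          rw [← Finset.card_pos] at h2 ⊢
          omega
      have hnne : (G.filter fun i => ¬ p i).Nonempty := by
        rw [← Finset.card_pos] at hpne ⊢
        omega
      obtain ⟨a, ha⟩ := hpne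
      obtain ⟨b, hb⟩ := hnne
      rw [Finset.mem_filter] at ha hb
      have hab : a ≠ b := fun h => hb.2 (h ▸ ha.2)
      set G' := (G.erase a).erase b with hG'
      have hbG' : b ∉ G' := Finset.notMem_erase _ _
      have haG' : a ∉ G' := fun h =>
        Finset.notMem_erase a G (Finset.mem_of_mem_erase h)
      have hsub : G' ⊆ G := (Finset.erase_subset _ _).trans (Finset.erase_subset _ _)
      have hss : G' ⊂ G := ⟨hsub, fun hGs => haG' (hGs ha.1)⟩
      have hfp : G'.filter p = (G.filter p).erase a := by
        rw [hG', Finset.filter_erase, Finset.filter_erase,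
          Finset.erase_eq_of_notMem
            (fun hmem => hb.2 (Finset.mem_filter.1 (Finset.mem_of_mem_erase hmem)).2)]
      have hfn : G'.filter (fun i => ¬ p i) = (G.filter (fun i => ¬ p i)).erase b := by
        have hrm : (G.filter (fun i => ¬ p i)).erase a = G.filter (fun i => ¬ p i) :=
          Finset.erase_eq_of_notMem (fun hmem => (Finset.mem_filter.1 hmem).2 ha.2)
        rw [hG', Finset.filter_erase, Finset.filter_erase, hrm]
      have hamem : a ∈ G.filter p := Finset.mem_filter.2 ⟨ha.1, ha.2⟩
      have hbmem : b ∈ G.filter (fun i => ¬ p i) := Finset.mem_filter.2 ⟨hb.1, hb.2⟩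
      have hpos1 : 1 ≤ (G.filter p).card := Finset.card_pos.2 ⟨a, hamem⟩
      have hcard' : (G'.filter p).card = (G'.filter (fun i => ¬ p i)).card := by
        rw [hfp, hfn, Finset.card_erase_of_mem hamem, Finset.card_erase_of_mem hbmem]
        omega
      obtain ⟨Q', hQ1, hQ2, hQ3, hQ4⟩ := ih G' hss hcard'
      have hnotmem : ({a, b} : Finset (Fin n)) ∉ Q' :=
        fun h => haG' ((hQ1 _ h).1 (Finset.mem_insert_self a {b}))
      refine ⟨insert {a, b} Q', ?_, ?_, ?_, ?_⟩
      · intro g hg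
        rcases Finset.mem_insert.1 hg with rfl | hg'
        · refine ⟨?_, Finset.card_pair hab, a, Finset.mem_insert_self _ _,
            b, by simp, ha.2, hb.2⟩
          intro y hy
          rcases Finset.mem_insert.1 hy with rfl | hy'
          · exact ha.1
          · exact (Finset.mem_singleton.1 hy') ▸ hb.1
        · obtain ⟨h1, h2, h3⟩ := hQ1 g hg'
          exact ⟨h1.trans hsub, h2, h3⟩
      · rw [Finset.coe_insert]
        refine hQ2.insert (fun g hg _ => ?_)
        refine Finset.disjoint_left.2 fun y hyab hyg => ?_
        have hyG' : y ∈ G' := (hQ1 g hg).1 hyg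
        rcases Finset.mem_insert.1 hyab with rfl | hyb
        · exact haG' hyG'
        · exact hbG' ((Finset.mem_singleton.1 hyb) ▸ hyG')
      · intro i hi
        by_cases hia : i = a
        · exact ⟨{a, b}, Finset.mem_insert_self _ _, by simp [hia]⟩
        by_cases hib : i = b
        · exact ⟨{a, b}, Finset.mem_insert_self _ _, by simp [hib]⟩
        · have : i ∈ G' := Finset.mem_erase.2 ⟨hib, Finset.mem_erase.2 ⟨hia, hi⟩⟩
          obtain ⟨g, hg, hig⟩ := hQ3 i this
          exact ⟨g, Finset.mem_insert_of_mem hg, hig⟩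
      · rw [Finset.sum_insert hnotmem, hQ4, Finset.card_pair hab]
        have hbe : b ∈ G.erase a := Finset.mem_erase.2 ⟨fun h => hab h.symm, hb.1⟩
        have h1 : G'.card = (G.erase a).card - 1 := by
          rw [hG', Finset.card_erase_of_mem hbe]
        have h2 : (G.erase a).card = G.card - 1 := Finset.card_erase_of_mem ha.1
        have h3 : 1 ≤ (G.erase a).card := Finset.card_pos.2 ⟨b, hbe⟩
        have h4 : 1 ≤ G.card := Finset.card_pos.2 ⟨a, ha.1⟩
        omega

theorem stmt19 {n d : ℕ} {V B : Type*} [Fintype B]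
    (hB : Fintype.card B = 2)
    (hn2 : 2 ≤ n) (hneven : Even n)
    (T : Fin n → (Fin d → V) × B)
    (hbalanced : ∀ b : B,
      (Finset.univ.filter (fun i : Fin n => (T i).2 = b)).card = n / 2) :
    ∃ Pstar : MPartition n,
      (∀ G ∈ Pstar.groups, G.card = 2 ∧
        ∃ i ∈ G, ∃ i' ∈ G, (T i).2 ≠ (T i').2) ∧
      Diverse 2 T Pstar ∧
      ∀ P : MPartition n, Diverse 2 T P → stars T Pstar ≤ stars T P := by
  classical
  -- B has exactly two elements b0 ≠ b1
  obtain ⟨b0, b1, hb01, huniv2⟩ :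
      ∃ x y : B, x ≠ y ∧ (Finset.univ : Finset B) = {x, y} :=
    Finset.card_eq_two.1 (by rw [Finset.card_univ, hB])
  have huniv : ∀ z : B, z = b0 ∨ z = b1 := by
    intro z
    have : z ∈ ({b0, b1} : Finset B) := huniv2 ▸ Finset.mem_univ z
    simpa using this
  -- any 2-eligible group is balanced for the predicate `(T i).2 = b0`
  have hbal : ∀ G : Finset (Fin n), Eligible 2 T G →
      (G.filter fun i => (T i).2 = b0).card
        = (G.filter fun i => ¬ ((T i).2 = b0)).card := by
    intro G hG
    have h0 := hG b0
    have h1 := hG b1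
    have heq : G.filter (fun i => ¬ ((T i).2 = b0))
        = G.filter (fun i => (T i).2 = b1) := by
      refine Finset.filter_congr fun i _ => ?_
      rcases huniv (T i).2 with h | h <;> simp [h, hb01, hb01.symm]
    have hsplit := Finset.card_filter_add_card_filter_not
      (s := G) (p := fun i => (T i).2 = b0)
    rw [heq]
    rw [heq] at hsplit
    omega
  -- refinement: every 2-diverse partition has a pair-refinement with ≤ stars
  have refine_ex : ∀ P : MPartition n, Diverse 2 T P →
      ∃ Q : MPartition n,
        (∀ G ∈ Q.groups, G.card = 2 ∧ ∃ i ∈ G, ∃ i' ∈ G, (T i).2 ≠ (T i').2) ∧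
        stars T Q ≤ stars T P := by
    intro P hP
    have hch : ∀ G : Finset (Fin n), ∃ Q : Finset (Finset (Fin n)),
        G ∈ P.groups →
          ((∀ g ∈ Q, g ⊆ G ∧ g.card = 2 ∧
              ∃ i ∈ g, ∃ i' ∈ g, ((T i).2 = b0) ∧ ¬ ((T i').2 = b0)) ∧
           (Q : Set (Finset (Fin n))).PairwiseDisjoint id ∧
           (∀ i ∈ G, ∃ g ∈ Q, i ∈ g) ∧
           ∑ g ∈ Q, g.card = G.card) := by
      intro G
      by_cases h : G ∈ P.groups
      · obtain ⟨Q, hQ⟩ := pair_decomp (fun i => (T i).2 = b0) G (hbal G (hP G h))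
        exact ⟨Q, fun _ => hQ⟩
      · exact ⟨∅, fun h' => absurd h' h⟩
    choose Qf hQf using hch
    refine ⟨⟨P.groups.biUnion Qf, ?_, ?_, ?_⟩, ?_, ?_⟩
    · -- nonempty
      intro g hg
      obtain ⟨G, hG, hg⟩ := Finset.mem_biUnion.1 hg
      have := ((hQf G hG).1 g hg).2.1
      exact Finset.card_pos.1 (by omega)
    · -- pairwiseDisjoint
      intro g1 hg1 g2 hg2 hne
      simp only [Finset.mem_coe, Finset.mem_biUnion] at hg1 hg2
      obtain ⟨G1, hG1, hg1⟩ := hg1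
      obtain ⟨G2, hG2, hg2⟩ := hg2
      by_cases hGG : G1 = G2
      · subst hGG
        exact (hQf G1 hG1).2.1 (Finset.mem_coe.2 hg1) (Finset.mem_coe.2 hg2) hne
      · have hd := P.pairwiseDisjoint hG1 hG2 hGG
        refine Finset.disjoint_left.2 fun y hy1 hy2 => ?_
        exact Finset.disjoint_left.1 hd (((hQf G1 hG1).1 g1 hg1).1 hy1)
          (((hQf G2 hG2).1 g2 hg2).1 hy2)
    · -- covers
      intro i
      obtain ⟨G, hG, hiG⟩ := P.covers i
      obtain ⟨g, hg, hig⟩ := (hQf G hG).2.2.1 i hiG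
      exact ⟨g, Finset.mem_biUnion.2 ⟨G, hG, hg⟩, hig⟩
    · -- every group is a mixed pair
      intro g hg
      obtain ⟨G, hG, hg⟩ := Finset.mem_biUnion.1 hg
      obtain ⟨hsub, hc2, i, hi, i', hi', hpi, hpi'⟩ := (hQf G hG).1 g hg
      exact ⟨hc2, i, hi, i', hi', fun h => hpi' (h ▸ hpi)⟩
    · -- stars inequality
      have hdisj : (P.groups : Set (Finset (Fin n))).PairwiseDisjoint Qf := by
        intro G1 hG1 G2 hG2 hne
        refine Finset.disjoint_left.2 fun g hg1 hg2 => ?_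
        have h1 := (hQf G1 hG1).1 g hg1
        have h2 := (hQf G2 hG2).1 g hg2
        obtain ⟨y, hy⟩ : g.Nonempty := Finset.card_pos.1 (by omega)
        have hd := P.pairwiseDisjoint hG1 hG2 hne
        exact Finset.disjoint_left.1 hd (h1.1 hy) (h2.1 hy)
      simp only [stars]
      rw [Finset.sum_biUnion hdisj]
      refine Finset.sum_le_sum fun G hG => ?_
      obtain ⟨hprop, -, -, hsum⟩ := hQf G hG
      calc ∑ g ∈ Qf G,
            g.card * (Finset.univ.filter (fun j : Fin d => Disagrees T g j)).card
          ≤ ∑ g ∈ Qf G,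
            g.card * (Finset.univ.filter (fun j : Fin d => Disagrees T G j)).card := by
            refine Finset.sum_le_sum fun g hg => ?_
            refine Nat.mul_le_mul_left _ (Finset.card_le_card ?_)
            intro j hj
            rw [Finset.mem_filter] at hj ⊢
            obtain ⟨i, hi, i', hi', hne⟩ := hj.2
            exact ⟨hj.1, i, (hprop g hg).1 hi, i', (hprop g hg).1 hi', hne⟩
        _ = (∑ g ∈ Qf G, g.card)
              * (Finset.univ.filter (fun j : Fin d => Disagrees T G j)).card :=
            (Finset.sum_mul ..).symm
        _ = G.card * (Finset.univ.filter (fun j : Fin d => Disagrees T G j)).card := by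
            rw [hsum]
  -- the one-group partition is 2-diverse
  have hFnn : (Finset.univ : Finset (Fin n)).Nonempty :=
    ⟨⟨0, by omega⟩, Finset.mem_univ _⟩
  let P0 : MPartition n :=
    ⟨{Finset.univ}, fun G hG => (Finset.mem_singleton.1 hG) ▸ hFnn,
      by rw [Finset.coe_singleton]; exact Set.pairwiseDisjoint_singleton _ _,
      fun i => ⟨Finset.univ, Finset.mem_singleton_self _, Finset.mem_univ i⟩⟩
  have hdiv0 : Diverse 2 T P0 := by
    intro G hG b
    rw [Finset.mem_singleton.1 hG]
    rw [hbalanced b, Finset.card_univ, Fintype.card_fin]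
    obtain ⟨k, hk⟩ := hneven
    omega
  -- minimize stars over pair partitions
  set S : Set ℕ := {m | ∃ P : MPartition n,
    (∀ G ∈ P.groups, G.card = 2 ∧ ∃ i ∈ G, ∃ i' ∈ G, (T i).2 ≠ (T i').2) ∧
    stars T P = m} with hSdef
  have hS : S.Nonempty := by
    obtain ⟨Q, hQ1, -⟩ := refine_ex P0 hdiv0
    exact ⟨stars T Q, Q, hQ1, rfl⟩
  obtain ⟨Pstar, hstar1, hstar2⟩ := Nat.sInf_mem hS
  refine ⟨Pstar, hstar1, ?_, ?_⟩
  · -- diversity of Pstar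
    intro G hG b
    obtain ⟨hc2, i, hi, i', hi', hii⟩ := hstar1 G hG
    have hle : (G.filter fun x => (T x).2 = b).card ≤ 1 := by
      by_contra h
      push_neg at h
      have hsub := Finset.filter_subset (fun x => (T x).2 = b) G
      have heq : G.filter (fun x => (T x).2 = b) = G :=
        Finset.eq_of_subset_of_card_le hsub (by omega)
      have h1 : (T i).2 = b := (Finset.mem_filter.1 (heq ▸ hi : i ∈ G.filter _)).2
      have h2 : (T i').2 = b := (Finset.mem_filter.1 (heq ▸ hi' : i' ∈ G.filter _)).2
      exact hii (h1.trans h2.symm)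
    omega
  · -- optimality
    intro P hP
    obtain ⟨Q, hQ1, hQ2⟩ := refine_ex P hP
    have hmem : stars T Q ∈ S := ⟨Q, hQ1, rfl⟩
    calc stars T Pstar = sInf S := hstar2
      _ ≤ stars T Q := Nat.sInf_le hmem
      _ ≤ stars T P := hQ2
end
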